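/- Let β ∈ ℓ¹ and r ∈ ℝ with ‖β‖₁ ≤ r. Then the map T : W_β → W_{r·e₁*} defined by T(x) = (x_∞/r, x(1), x(2), ...), where x_∞ = lim_n x(n), is a linear isometry from W_β into W_{r·e₁*} (assuming r > 0). -/

import Mathlib

open Filter Topology

noncomputable section

/-- `x` belongs to the hyperplane `W_α` of the space `c` of convergent real sequences:
`x` converges and its limit equals `∑' i, α i * x i` (sequences are 0-indexed). -/
def MemW (α x : ℕ → ℝ) : Prop :=
  (∃ l : ℝ, Tendsto x atTop (𝓝 l)) ∧ Tendsto x atTop (𝓝 (∑' i, α i * x i))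

/-- The sup norm of a real sequence. -/
def supNorm (x : ℕ → ℝ) : ℝ := ⨆ i, |x i|

/-- The element `r·e₁* = (r,0,0,…)` of `ℓ¹`. -/
def rSeq (r : ℝ) : ℕ → ℝ := fun i => if i = 0 then r else 0

lemma summable_abs_mul {β x : ℕ → ℝ} (hsum : Summable fun i => |β i|)
    {C : ℝ} (hC : ∀ i, |x i| ≤ C) : Summable fun i => |β i * x i| := by
  refine Summable.of_nonneg_of_le (fun i => abs_nonneg _) (fun i => ?_) (hsum.mul_right C)
  rw [abs_mul]
  exact mul_le_mul_of_nonneg_left (hC i) (abs_nonneg _)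

lemma summable_mul {β x : ℕ → ℝ} (hsum : Summable fun i => |β i|)
    {l : ℝ} (hx : Tendsto x atTop (𝓝 l)) : Summable fun i => β i * x i := by
  obtain ⟨C, hC⟩ := hx.abs.bddAbove_range
  exact Summable.of_abs (summable_abs_mul hsum fun i => hC ⟨i, rfl⟩)

/-- for `β ∈ ℓ¹` and `r > 0` with `‖β‖₁ ≤ r`, the map
`T x = (x_∞ / r, x(1), x(2), …)` (with `x_∞ = lim x = ∑ β i * x i`) is a linear
isometry from `W_β` into `W_{r·e₁*}`. -/
theorem stmt4 (β : ℕ → ℝ) (hsum : Summable fun i => |β i|)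
    (r : ℝ) (hr : ∑' i, |β i| ≤ r) (hr0 : 0 < r)
    (T : (ℕ → ℝ) → (ℕ → ℝ))
    (hT : ∀ x m, T x m = if m = 0 then (∑' i, β i * x i) / r else x (m - 1)) :
    (∀ x, MemW β x → MemW (rSeq r) (T x) ∧ supNorm (T x) = supNorm x) ∧
    (∀ x y, MemW β x → MemW β y → T (x + y) = T x + T y) ∧
    (∀ (a : ℝ) (x : ℕ → ℝ), MemW β x → T (a • x) = a • T x) := by
  refine ⟨?_, ?_, ?_⟩
  · intro x hx
    set s := ∑' i, β i * x i with hs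
    have htail : Tendsto (T x) atTop (𝓝 s) := by
      have h1 : Tendsto (fun m : ℕ => x (m - 1)) atTop (𝓝 s) :=
        hx.2.comp (tendsto_sub_atTop_nat 1)
      refine h1.congr' ?_
      filter_upwards [eventually_ge_atTop 1] with m hm
      rw [hT]
      have : m ≠ 0 := by omega
      simp [this]
    have htsum : (∑' i, rSeq r i * T x i) = s := by
      have heq : (fun i => rSeq r i * T x i) = fun i => if i = 0 then s else 0 := by
        funext i
        by_cases h : i = 0
        · subst h
          simp [rSeq, hT, mul_div_cancel₀ _ hr0.ne', hs]
        · simp [rSeq, h]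
      rw [heq, tsum_ite_eq]
    have hb : BddAbove (Set.range fun i => |x i|) := hx.2.abs.bddAbove_range
    have hle : ∀ i, |x i| ≤ supNorm x := fun i => le_ciSup hb i
    have hs0 : 0 ≤ supNorm x := (abs_nonneg _).trans (hle 0)
    have hsummand : Summable fun i => |β i * x i| := summable_abs_mul hsum hle
    have habs : |s| ≤ r * supNorm x := by
      calc |s| ≤ ∑' i, |β i * x i| := by
            simpa only [Real.norm_eq_abs] using norm_tsum_le_tsum_norm (f := fun i => β i * x i)
              (by simpa only [Real.norm_eq_abs] using hsummand)
        _ ≤ ∑' i, |β i| * supNorm x := by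
            refine Summable.tsum_le_tsum (fun i => ?_) hsummand (hsum.mul_right _)
            rw [abs_mul]
            exact mul_le_mul_of_nonneg_left (hle i) (abs_nonneg _)
        _ = (∑' i, |β i|) * supNorm x := tsum_mul_right
        _ ≤ r * supNorm x := mul_le_mul_of_nonneg_right hr hs0
    have hall : ∀ m, |T x m| ≤ supNorm x := by
      intro m
      rw [hT]
      by_cases h : m = 0
      · simp only [h, if_true]
        rw [abs_div, abs_of_pos hr0, div_le_iff₀ hr0, mul_comm]
        exact habs
      · simp only [h, if_false]
        exact hle _
    have hbT : BddAbove (Set.range fun m => |T x m|) :=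
      ⟨supNorm x, by rintro y ⟨m, rfl⟩; exact hall m⟩
    refine ⟨⟨⟨s, htail⟩, by rw [htsum]; exact htail⟩, le_antisymm (ciSup_le hall) ?_⟩
    refine ciSup_le fun i => ?_
    have : |x i| = |T x (i + 1)| := by rw [hT]; simp
    rw [this]
    exact le_ciSup hbT (i + 1)
  · intro x y hx hy
    have hsx := summable_mul hsum hx.2
    have hsy := summable_mul hsum hy.2
    funext m
    rw [Pi.add_apply, hT, hT, hT]
    by_cases h : m = 0
    · simp only [h, if_true]
      have : (fun i => β i * (x + y) i) = fun i => β i * x i + β i * y i := by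
        funext i; simp [mul_add]
      rw [this, Summable.tsum_add hsx hsy, add_div]
    · simp [h]
  · intro a x hx
    funext m
    rw [Pi.smul_apply, hT, hT]
    by_cases h : m = 0
    · simp only [h, if_true]
      have : (fun i => β i * (a • x) i) = fun i => a * (β i * x i) := by
        funext i; simp [Pi.smul_apply, smul_eq_mul]; ring
      rw [this, tsum_mul_left, smul_eq_mul, mul_div_assoc]
    · simp [h]
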